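/- Let F be a finite field with q = |F| elements, and let n, D be naturals with D ≥ 1, 2D+1 < n, and (2D+1)/n ≤ 1 − 1/q. Then there exist a natural m with m ≤ (2D+1)·log_q(n/(2D+1)) + (2D+1)·log_q(q−1) + (2D+1)·log_q(e) + 1 and a matrix M ∈ F^{m×n} such that every nonzero vector v in the kernel of M satisfies ‖v‖₀ ≥ 2D + 1 (and hence Mx = My with ‖x‖₀, ‖y‖₀ ≤ D forces x = y, so M allows Δ-approximation of the sparsity of every vector of sparsity at most D for every real Δ > 1). -/

import Mathlib

open Finset Nat

section Aux
variable {F : Type*} [Field F] [Fintype F] [DecidableEq F]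

variable {F : Type*} [Field F] [Fintype F] [DecidableEq F]

/-- Fiber count: vectors with exactly support `s` number at most `(q-1)^|s|`. -/
lemma fiber_card_le {n : ℕ} (s : Finset (Fin n)) :
    (univ.filter (fun v : Fin n → F => univ.filter (fun i => v i ≠ 0) = s)).card
      ≤ (Fintype.card F - 1) ^ s.card := by
  classical
  have h1 : (univ.filter (fun v : Fin n → F => univ.filter (fun i => v i ≠ 0) = s)).card
      = Fintype.card {v : Fin n → F // univ.filter (fun i => v i ≠ 0) = s} := by
    rw [Fintype.card_subtype]
  rw [h1]
  have h2 : Fintype.card ((i : s) → {x : F // x ≠ 0})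
      = (Fintype.card F - 1) ^ s.card := by
    rw [Fintype.card_pi]
    have : Fintype.card {x : F // x ≠ 0} = Fintype.card F - 1 := by
      rw [Fintype.card_subtype_compl, Fintype.card_subtype_eq]
    simp [this, Finset.prod_const, Finset.card_univ, Fintype.card_coe]
  rw [← h2]
  apply Fintype.card_le_of_injective
    (fun v i => ⟨v.1 i.1, by
      have hmem : (i : Fin n) ∈ univ.filter (fun j => v.1 j ≠ 0) := by
        rw [v.2]; exact i.2
      exact (Finset.mem_filter.mp hmem).2⟩)
  intro v w hvw
  ext i
  by_cases hi : i ∈ s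
  · exact congrArg Subtype.val (congrFun hvw ⟨i, hi⟩)
  · have hv : v.1 i = 0 := by
      by_contra hne
      rw [← v.2, Finset.mem_filter] at hi
      exact hi ⟨Finset.mem_univ i, hne⟩
    have hw : w.1 i = 0 := by
      by_contra hne
      rw [← w.2, Finset.mem_filter] at hi
      exact hi ⟨Finset.mem_univ i, hne⟩
    rw [hv, hw]

/-- Count of vectors of sparsity at most `k`. -/
lemma card_sparse_le {n k : ℕ} :
    (univ.filter (fun v : Fin n → F => (univ.filter (fun i => v i ≠ 0)).card ≤ k)).card
      ≤ (∑ i ∈ Finset.range (k+1), n.choose i) * (Fintype.card F - 1) ^ k := by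
  classical
  set B := univ.filter (fun v : Fin n → F => (univ.filter (fun i => v i ≠ 0)).card ≤ k) with hB
  set T := (Finset.range (k+1)).biUnion (fun i => Finset.powersetCard i (univ : Finset (Fin n)))
    with hT
  have hmem : ∀ v ∈ B, (univ.filter (fun i => v i ≠ 0)) ∈ T := by
    intro v hv
    rw [hB, Finset.mem_filter] at hv
    rw [hT, Finset.mem_biUnion]
    exact ⟨(univ.filter (fun i => v i ≠ 0)).card, Finset.mem_range.mpr (Nat.lt_succ_of_le hv.2),
      Finset.mem_powersetCard_univ.mpr rfl⟩
  rw [Finset.card_eq_sum_card_fiberwise hmem]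
  have hfiber : ∀ s ∈ T, (B.filter (fun v => univ.filter (fun i => v i ≠ 0) = s)).card
      ≤ (Fintype.card F - 1) ^ k := by
    intro s hs
    rw [hT, Finset.mem_biUnion] at hs
    obtain ⟨i, hi, his⟩ := hs
    rw [Finset.mem_powersetCard_univ] at his
    calc (B.filter (fun v => univ.filter (fun i => v i ≠ 0) = s)).card
        ≤ (univ.filter (fun v : Fin n → F => univ.filter (fun i => v i ≠ 0) = s)).card := by
          apply Finset.card_le_card
          intro v hv
          rw [Finset.mem_filter] at hv ⊢
          exact ⟨Finset.mem_univ v, hv.2⟩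
      _ ≤ (Fintype.card F - 1) ^ s.card := fiber_card_le s
      _ ≤ (Fintype.card F - 1) ^ k := by
          apply Nat.pow_le_pow_right
          · have : 2 ≤ Fintype.card F := Fintype.one_lt_card
            omega
          · rw [his]; exact Nat.lt_succ_iff.mp (Finset.mem_range.mp hi)
  have h3 : ∑ s ∈ T, (B.filter (fun v => univ.filter (fun i => v i ≠ 0) = s)).card
      ≤ T.card * (Fintype.card F - 1) ^ k := by
    calc ∑ s ∈ T, (B.filter (fun v => univ.filter (fun i => v i ≠ 0) = s)).card
        ≤ ∑ s ∈ T, (Fintype.card F - 1) ^ k := Finset.sum_le_sum hfiber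
      _ = T.card * (Fintype.card F - 1) ^ k := by
          rw [Finset.sum_const, smul_eq_mul]
  refine h3.trans (Nat.mul_le_mul_right _ ?_)
  calc T.card ≤ ∑ i ∈ Finset.range (k+1), (Finset.powersetCard i (univ : Finset (Fin n))).card :=
        Finset.card_biUnion_le
    _ = ∑ i ∈ Finset.range (k+1), n.choose i := by
        apply Finset.sum_congr rfl
        intro i _
        rw [Finset.card_powersetCard, Finset.card_univ, Fintype.card_fin]

/-- Analytic tail bound: `∑_{i ≤ k} C(n,i) ≤ (e n / k)^k` for `1 ≤ k ≤ n`. -/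
lemma sum_choose_le_real {n k : ℕ} (hk : 1 ≤ k) (hkn : k ≤ n) :
    ((∑ i ∈ Finset.range (k+1), n.choose i : ℕ) : ℝ)
      ≤ (Real.exp 1 * n / k) ^ k := by
  have hk0 : (0:ℝ) < k := by exact_mod_cast hk
  have hn0 : (0:ℝ) < n := by exact_mod_cast lt_of_lt_of_le hk hkn
  push_cast
  have step1 : ∀ i ∈ Finset.range (k+1), ((n.choose i : ℝ))
      ≤ ((n:ℝ)/k)^k * ((k:ℝ)^i / (Nat.factorial i)) := by
    intro i hi
    have hik : i ≤ k := Nat.lt_succ_iff.mp (Finset.mem_range.mp hi)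
    have key : (n:ℝ)^i ≤ ((n:ℝ)/k)^k * (k:ℝ)^i := by
      rw [div_pow, div_mul_eq_mul_div, le_div_iff₀ (by positivity)]
      calc (n:ℝ)^i * (k:ℝ)^k = (n:ℝ)^i * ((k:ℝ)^i * (k:ℝ)^(k-i)) := by
            rw [show (k:ℝ)^i * (k:ℝ)^(k-i) = (k:ℝ)^(i+(k-i)) from (pow_add _ _ _).symm,
              show i + (k-i) = k by omega]
        _ ≤ (n:ℝ)^i * ((k:ℝ)^i * (n:ℝ)^(k-i)) := by
            apply mul_le_mul_of_nonneg_left _ (by positivity)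
            apply mul_le_mul_of_nonneg_left _ (by positivity)
            exact pow_le_pow_left₀ (by positivity) (by exact_mod_cast hkn) _
        _ = (n:ℝ)^k * (k:ℝ)^i := by
            rw [mul_comm ((k:ℝ)^i), ← mul_assoc,
              show (n:ℝ)^i * (n:ℝ)^(k-i) = (n:ℝ)^(i+(k-i)) from (pow_add _ _ _).symm,
              show i + (k-i) = k by omega]
    calc ((n.choose i : ℝ)) ≤ (n:ℝ)^i / (Nat.factorial i) := Nat.choose_le_pow_div i n
      _ ≤ (((n:ℝ)/k)^k * (k:ℝ)^i) / (Nat.factorial i) := by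
          gcongr
      _ = ((n:ℝ)/k)^k * ((k:ℝ)^i / (Nat.factorial i)) := by ring
  calc ∑ i ∈ Finset.range (k+1), ((n.choose i : ℝ))
      ≤ ∑ i ∈ Finset.range (k+1), ((n:ℝ)/k)^k * ((k:ℝ)^i / (Nat.factorial i)) :=
        Finset.sum_le_sum step1
    _ = ((n:ℝ)/k)^k * ∑ i ∈ Finset.range (k+1), ((k:ℝ)^i / (Nat.factorial i)) := by
        rw [Finset.mul_sum]
    _ ≤ ((n:ℝ)/k)^k * Real.exp k := by
        apply mul_le_mul_of_nonneg_left _ (by positivity)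
        exact Real.sum_le_exp_of_nonneg (by positivity) (k+1)
    _ = (Real.exp 1 * n / k) ^ k := by
        rw [show (k:ℝ) = (k:ℕ) * (1:ℝ) by simp, Real.exp_nat_mul, ← mul_pow]
        congr 1
        field_simp

/-- The kernel of a nonzero linear functional has at most `q^(n-1)` elements. -/
lemma card_dot_zero_le {n : ℕ} {v : Fin n → F} (hv : v ≠ 0) :
    Fintype.card {r : Fin n → F // ∑ i, r i * v i = 0} ≤ Fintype.card F ^ (n - 1) := by
  classical
  obtain ⟨j, hj⟩ : ∃ j, v j ≠ 0 := Function.ne_iff.mp hv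
  have hcard : Fintype.card ({i : Fin n // i ≠ j} → F) = Fintype.card F ^ (n - 1) := by
    rw [Fintype.card_fun]
    congr 1
    rw [Fintype.card_subtype_compl, Fintype.card_subtype_eq, Fintype.card_fin]
  rw [← hcard]
  apply Fintype.card_le_of_injective (fun r i => r.1 i.1)
  intro r w hrw
  ext i
  by_cases hij : i = j
  · subst hij
    have hsum : ∀ (u : {r : Fin n → F // ∑ i, r i * v i = 0}),
        u.1 i * v i = - ∑ l ∈ univ.erase i, u.1 l * v l := by
      intro u
      have hu := u.2
      rw [← Finset.add_sum_erase _ _ (Finset.mem_univ i)] at hu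
      linear_combination hu
    have heq : ∑ l ∈ univ.erase i, r.1 l * v l = ∑ l ∈ univ.erase i, w.1 l * v l := by
      apply Finset.sum_congr rfl
      intro l hl
      have hlne : l ≠ i := (Finset.mem_erase.mp hl).1
      rw [show r.1 l = w.1 l from congrFun hrw ⟨l, hlne⟩]
    have h2 : r.1 i * v i = w.1 i * v i := by rw [hsum r, heq, ← hsum w]
    exact mul_right_cancel₀ hj h2
  · exact congrFun hrw ⟨i, hij⟩

/-- Count of matrices annihilating a fixed nonzero vector. -/
lemma card_mulVec_zero_le {m n : ℕ} {v : Fin n → F} (hv : v ≠ 0) :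
    (univ.filter (fun M : Matrix (Fin m) (Fin n) F => M.mulVec v = 0)).card
      ≤ (Fintype.card F ^ (n - 1)) ^ m := by
  classical
  rw [← Fintype.card_subtype]
  have h1 : Fintype.card (Fin m → {r : Fin n → F // ∑ i, r i * v i = 0})
      ≤ (Fintype.card F ^ (n - 1)) ^ m := by
    rw [Fintype.card_fun, Fintype.card_fin]
    exact Nat.pow_le_pow_left (card_dot_zero_le hv) m
  refine le_trans ?_ h1
  apply Fintype.card_le_of_injective
    (fun M k => ⟨fun i => M.1 k i, by
      have := congrFun M.2 k
      simpa [Matrix.mulVec, dotProduct] using this⟩)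
  intro M N hMN
  ext k i
  exact congrArg (fun f => f i) (congrArg Subtype.val (congrFun hMN k))

/-- Existence of a matrix avoiding a small set of vectors in its kernel. -/
lemma exists_good_matrix {m n : ℕ} (hn : 1 ≤ n) (B : Finset (Fin n → F))
    (hB0 : (0 : Fin n → F) ∉ B) (hBcard : B.card < Fintype.card F ^ m) :
    ∃ M : Matrix (Fin m) (Fin n) F, ∀ v ∈ B, M.mulVec v ≠ 0 := by
  classical
  have hq : 0 < Fintype.card F := Fintype.card_pos
  set S : Finset (Matrix (Fin m) (Fin n) F) :=
    B.biUnion (fun v => univ.filter (fun M => M.mulVec v = 0)) with hS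
  have hScard : S.card < Fintype.card (Matrix (Fin m) (Fin n) F) := by
    have h1 : S.card ≤ B.card * (Fintype.card F ^ (n - 1)) ^ m := by
      refine Finset.card_biUnion_le.trans ?_
      calc ∑ v ∈ B, (univ.filter (fun M : Matrix (Fin m) (Fin n) F => M.mulVec v = 0)).card
          ≤ ∑ v ∈ B, (Fintype.card F ^ (n - 1)) ^ m := by
            apply Finset.sum_le_sum
            intro v hv
            have hvne : v ≠ 0 := fun hz => hB0 (hz ▸ hv)
            exact card_mulVec_zero_le hvne
        _ = B.card * (Fintype.card F ^ (n - 1)) ^ m := by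
            rw [Finset.sum_const, smul_eq_mul]
    have h2 : Fintype.card (Matrix (Fin m) (Fin n) F) = (Fintype.card F ^ n) ^ m := by
      rw [Fintype.card_congr (Matrix.of.symm : Matrix (Fin m) (Fin n) F ≃ (Fin m → Fin n → F)),
        Fintype.card_fun, Fintype.card_fun, Fintype.card_fin, Fintype.card_fin]
    have h3 : B.card * (Fintype.card F ^ (n - 1)) ^ m
        < Fintype.card F ^ m * (Fintype.card F ^ (n - 1)) ^ m := by
      apply Nat.mul_lt_mul_of_lt_of_le hBcard (le_refl _)
      exact Nat.pow_pos (Nat.pow_pos hq)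
    refine lt_of_le_of_lt h1 (lt_of_lt_of_le h3 ?_)
    rw [h2, ← Nat.mul_pow, ← _root_.pow_succ', show n - 1 + 1 = n by omega]
  have : S ≠ univ := by
    intro hSu
    rw [hSu, Finset.card_univ] at hScard
    exact lt_irrefl _ hScard
  obtain ⟨M, hM⟩ : ∃ M, M ∉ S := by
    by_contra hc
    push_neg at hc
    exact this (Finset.eq_univ_iff_forall.mpr fun M => hc M)
  refine ⟨M, fun v hv hMv => hM ?_⟩
  rw [hS, Finset.mem_biUnion]
  exact ⟨v, hv, Finset.mem_filter.mpr ⟨Finset.mem_univ M, hMv⟩⟩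

end Aux


/-- The sparsity (number of nonzero entries) of a vector. -/
noncomputable def sparsity {F : Type*} [Zero F] {n : ℕ} (x : Fin n → F) : ℕ :=
  Set.ncard {i | x i ≠ 0}

/-- Asymptotic form of the Gilbert–Varshamov-type bound: over a finite field `F` with `q`
elements, if `D ≥ 1`, `2D+1 < n`, and `(2D+1)/n ≤ 1 − 1/q`, there is a matrix
`M ∈ F^{m×n}` with `m ≤ (2D+1)·log_q(n/(2D+1)) + (2D+1)·log_q(q−1) + (2D+1)·log_q(e) + 1`
rows all of whose nonzero kernel vectors have sparsity at least `2D+1`; hence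
`M x = M y` with `‖x‖₀, ‖y‖₀ ≤ D` forces `x = y`, so `M` allows `Δ`-approximation of the
sparsity of all vectors of sparsity at most `D` for every `Δ > 1`. -/
theorem gv_bound_matrix_asymptotic (F : Type*) [Field F] [Fintype F] (n D : ℕ)
    (hD : 1 ≤ D) (hn : 2 * D + 1 < n)
    (h : ((2 * D + 1 : ℕ) : ℝ) / (n : ℝ) ≤ 1 - 1 / (Fintype.card F : ℝ)) :
    ∃ m : ℕ,
      (m : ℝ) ≤ ((2 * D + 1 : ℕ) : ℝ) *
          Real.logb (Fintype.card F) ((n : ℝ) / ((2 * D + 1 : ℕ) : ℝ)) +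
        ((2 * D + 1 : ℕ) : ℝ) * Real.logb (Fintype.card F) ((Fintype.card F : ℝ) - 1) +
        ((2 * D + 1 : ℕ) : ℝ) * Real.logb (Fintype.card F) (Real.exp 1) + 1 ∧
      ∃ M : Matrix (Fin m) (Fin n) F,
        (∀ v : Fin n → F, M.mulVec v = 0 → v ≠ 0 → 2 * D + 1 ≤ sparsity v) ∧
        (∀ x y : Fin n → F, sparsity x ≤ D → sparsity y ≤ D →
          M.mulVec x = M.mulVec y → x = y) := by
  classical
  have hq : 2 ≤ Fintype.card F := Fintype.one_lt_card
  have hsp : ∀ (v : Fin n → F), sparsity v = (univ.filter (fun i => v i ≠ 0)).card := by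
    intro v
    rw [sparsity, show {i | v i ≠ 0} = ↑(univ.filter (fun i => v i ≠ 0)) by ext i; simp,
      Set.ncard_coe_finset]
  set B := univ.filter (fun v : Fin n → F => (univ.filter (fun i => v i ≠ 0)).card ≤ 2*D)
    with hBdef
  have h0B : (0 : Fin n → F) ∈ B := by
    rw [hBdef, Finset.mem_filter]
    refine ⟨Finset.mem_univ _, ?_⟩
    simp
  have hV1 : 1 ≤ B.card := Finset.card_pos.mpr ⟨0, h0B⟩
  set m := Nat.log (Fintype.card F) B.card + 1 with hm
  have hVm : B.card < Fintype.card F ^ m := Nat.lt_pow_succ_log_self hq _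
  set B0 := B.filter (fun v => v ≠ 0) with hB0def
  have hB0card : B0.card < Fintype.card F ^ m :=
    lt_of_le_of_lt (Finset.card_le_card (Finset.filter_subset _ _)) hVm
  obtain ⟨M, hM⟩ := exists_good_matrix (m := m) (by omega) B0
    (by rw [hB0def]; simp) hB0card
  have prop1 : ∀ v : Fin n → F, M.mulVec v = 0 → v ≠ 0 → 2 * D + 1 ≤ sparsity v := by
    intro v hv0 hvne
    by_contra hlt
    push_neg at hlt
    have hvB : v ∈ B0 := by
      rw [hB0def, Finset.mem_filter, hBdef, Finset.mem_filter]
      refine ⟨⟨Finset.mem_univ _, ?_⟩, hvne⟩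
      rw [← hsp]; omega
    exact hM v hvB hv0
  refine ⟨m, ?_, M, prop1, ?_⟩
  · -- numeric bound
    set q := Fintype.card F with hqdef
    set K := 2 * D + 1 with hK
    have hq1 : (1:ℝ) < q := by exact_mod_cast hq
    have hKn : K ≤ n := hn.le
    have hK1 : 1 ≤ K := by omega
    have hK0 : (0:ℝ) < K := by exact_mod_cast hK1
    have hn0 : (0:ℝ) < n := by exact_mod_cast (by omega : 0 < n)
    have hq1' : (1:ℝ) ≤ (q:ℝ) - 1 := by
      have : (2:ℝ) ≤ q := by exact_mod_cast hq
      linarith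
    -- bound on B.card in ℝ
    have hcast : (((Fintype.card F - 1 : ℕ)) : ℝ) = (q:ℝ) - 1 := by
      rw [Nat.cast_sub (by omega)]; simp [hqdef]
    have hb1 : (B.card : ℝ) ≤
        ((∑ i ∈ Finset.range (2*D+1), n.choose i : ℕ) : ℝ) * ((q:ℝ) - 1) ^ (2*D) := by
      have := card_sparse_le (F := F) (n := n) (k := 2*D)
      calc (B.card : ℝ) ≤ (((∑ i ∈ Finset.range (2*D+1), n.choose i) *
            (Fintype.card F - 1) ^ (2*D) : ℕ) : ℝ) := by exact_mod_cast this
        _ = _ := by push_cast [hcast]; ring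
    have hsum : ((∑ i ∈ Finset.range (2*D+1), n.choose i : ℕ) : ℝ)
        ≤ (Real.exp 1 * n / K) ^ K := by
      refine le_trans ?_ (sum_choose_le_real (n := n) (k := K) hK1 hKn)
      have hsub : (∑ i ∈ Finset.range (2*D+1), n.choose i)
          ≤ (∑ i ∈ Finset.range (K+1), n.choose i) := by
        apply Finset.sum_le_sum_of_subset
        apply Finset.range_subset_range.mpr; omega
      exact_mod_cast hsub
    have hpow : ((q:ℝ) - 1) ^ (2*D) ≤ ((q:ℝ) - 1) ^ K := by
      apply pow_le_pow_right₀ hq1'; omega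
    set P := (Real.exp 1 * n / K) ^ K * ((q:ℝ) - 1) ^ K with hP
    have hbP : (B.card : ℝ) ≤ P := by
      refine hb1.trans ?_
      rw [hP]
      apply mul_le_mul hsum hpow (by positivity) (by positivity)
    have hBpos : (0:ℝ) < B.card := by exact_mod_cast hV1
    have hlogb : Real.logb q B.card ≤ Real.logb q P :=
      Real.logb_le_logb_of_le hq1 hBpos hbP
    have hnat : ((Nat.log q B.card : ℕ) : ℝ) ≤ Real.logb q B.card :=
      Real.natLog_le_logb _ _
    have hPcalc : Real.logb q P = (K:ℝ) * Real.logb q ((n:ℝ)/K)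
        + (K:ℝ) * Real.logb q ((q:ℝ) - 1) + (K:ℝ) * Real.logb q (Real.exp 1) := by
      rw [hP, Real.logb_mul (by positivity) (by positivity), Real.logb_pow, Real.logb_pow,
        show Real.exp 1 * n / K = Real.exp 1 * ((n:ℝ)/K) by ring,
        Real.logb_mul (by positivity) (by positivity)]
      ring
    have hmr : (m:ℝ) = ((Nat.log q B.card : ℕ) : ℝ) + 1 := by
      rw [hm]; push_cast; ring
    rw [hmr]
    have h5 := hnat.trans (hlogb.trans_eq hPcalc)
    have hKr : (K:ℝ) = 2*(D:ℝ)+1 := by rw [hK]; push_cast; ring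
    rw [hKr] at h5
    push_cast
    linarith
  · -- injectivity on sparse vectors
    intro x y hx hy hxy
    by_contra hne
    have hv : M.mulVec (x - y) = 0 := by
      rw [Matrix.mulVec_sub, hxy, sub_self]
    have hvne : x - y ≠ 0 := sub_ne_zero.mpr hne
    have h1 := prop1 _ hv hvne
    have h2 : sparsity (x - y) ≤ sparsity x + sparsity y := by
      rw [sparsity, sparsity, sparsity]
      refine le_trans (Set.ncard_le_ncard ?_ ((Set.toFinite _).union (Set.toFinite _)))
        (Set.ncard_union_le _ _)
      intro i hi
      by_contra hc
      simp only [Set.mem_union, Set.mem_setOf_eq, not_or, not_not] at hc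
      exact hi (by simp [Pi.sub_apply, hc.1, hc.2])
    omega
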